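/- Let $\Gamma_g$ be a surface group of genus $g \geq 2$, let $E$ be a finite-dimensional complex representation of $\Gamma_g$, and let $e \in H^0(\Gamma_g, E) = E^{\Gamma_g}$ be a nonzero invariant vector. Then there exists a finite-dimensional representation $E'$ of $\Gamma_g$ and a $\Gamma_g$-equivariant surjection $q : E' \to E$ such that $e$ does not lie in the image of $H^0(\Gamma_g, E') \to H^0(\Gamma_g, E)$. -/

import Mathlib

open scoped commutatorElement in
/-- The surface group of genus `g`: the fundamental group of a compact Riemann surface of
genus `g`, with its standard presentation on generators `aᵢ = (i, false)`,
`bᵢ = (i, true)` and the single relation `∏ i, [aᵢ, bᵢ] = 1`. -/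
def SurfaceGroup (g : ℕ) : Type :=
  PresentedGroup
    ({(List.ofFn fun i : Fin g =>
        ⁅FreeGroup.of ((i : Fin g), false), FreeGroup.of ((i : Fin g), true)⁆).prod} :
      Set (FreeGroup (Fin g × Bool)))

instance (g : ℕ) : Group (SurfaceGroup g) := by
  unfold SurfaceGroup; infer_instance

open scoped commutatorElement

namespace SGAux

/-! ### Block upper triangular units on `ℂ × M` -/

variable {M : Type*} [AddCommGroup M] [Module ℂ M]

noncomputable def uval (z : ℂ) (f : M →ₗ[ℂ] ℂ) (A : M →ₗ[ℂ] M) : (ℂ × M) →ₗ[ℂ] (ℂ × M) :=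
  LinearMap.prod (z • LinearMap.fst ℂ ℂ M + f ∘ₗ LinearMap.snd ℂ ℂ M)
    (A ∘ₗ LinearMap.snd ℂ ℂ M)

@[simp] lemma uval_apply (z : ℂ) (f : M →ₗ[ℂ] ℂ) (A : M →ₗ[ℂ] M) (t : ℂ) (x : M) :
    uval z f A (t, x) = (z * t + f x, A x) := by simp [uval]

@[simp] lemma unit_inv_apply_apply (A : (M →ₗ[ℂ] M)ˣ) (x : M) :
    (↑A⁻¹ : M →ₗ[ℂ] M) ((A : M →ₗ[ℂ] M) x) = x := by
  rw [← Module.End.mul_apply, Units.inv_mul, Module.End.one_apply]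

@[simp] lemma unit_apply_inv_apply (A : (M →ₗ[ℂ] M)ˣ) (x : M) :
    (A : M →ₗ[ℂ] M) ((↑A⁻¹ : M →ₗ[ℂ] M) x) = x := by
  rw [← Module.End.mul_apply, Units.mul_inv, Module.End.one_apply]

noncomputable def uu (z : ℂˣ) (f : M →ₗ[ℂ] ℂ) (A : (M →ₗ[ℂ] M)ˣ) :
    ((ℂ × M) →ₗ[ℂ] (ℂ × M))ˣ where
  val := uval (z : ℂ) f (A : M →ₗ[ℂ] M)
  inv := uval ((z⁻¹ : ℂˣ) : ℂ) (-(((z⁻¹ : ℂˣ) : ℂ)) • (f ∘ₗ (↑A⁻¹ : M →ₗ[ℂ] M))) (↑A⁻¹ : M →ₗ[ℂ] M)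
  val_inv := by
    apply LinearMap.ext; rintro ⟨t, x⟩
    simp [Module.End.mul_apply]
    field_simp
    ring
  inv_val := by
    apply LinearMap.ext; rintro ⟨t, x⟩
    simp [Module.End.mul_apply]
    field_simp
    ring

@[simp] lemma uu_val (z : ℂˣ) (f : M →ₗ[ℂ] ℂ) (A : (M →ₗ[ℂ] M)ˣ) :
    ((uu z f A : ((ℂ × M) →ₗ[ℂ] (ℂ × M))ˣ) : (ℂ × M) →ₗ[ℂ] (ℂ × M)) = uval (z : ℂ) f A := rfl

lemma uu_inv (z : ℂˣ) (f : M →ₗ[ℂ] ℂ) (A : (M →ₗ[ℂ] M)ˣ) :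
    (uu z f A)⁻¹ = uu z⁻¹ (-(((z⁻¹ : ℂˣ) : ℂ)) • (f ∘ₗ (↑A⁻¹ : M →ₗ[ℂ] M))) A⁻¹ :=
  Units.ext rfl

lemma uu_mul (z₁ z₂ : ℂˣ) (f₁ f₂ : M →ₗ[ℂ] ℂ) (A₁ A₂ : (M →ₗ[ℂ] M)ˣ) :
    uu z₁ f₁ A₁ * uu z₂ f₂ A₂
      = uu (z₁ * z₂) ((z₁ : ℂ) • f₂ + f₁ ∘ₗ (A₂ : M →ₗ[ℂ] M)) (A₁ * A₂) := by
  apply Units.ext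
  rw [Units.val_mul]
  apply LinearMap.ext; rintro ⟨t, x⟩
  simp [Module.End.mul_apply]
  ring

lemma uu_one : (uu (M := M) 1 0 1) = 1 := by
  apply Units.ext
  apply LinearMap.ext; rintro ⟨t, x⟩
  simp [Module.End.mul_apply]

lemma uu_comm (f : M →ₗ[ℂ] ℂ) (w : ℂˣ) (A B : (M →ₗ[ℂ] M)ˣ) :
    ⁅uu 1 f A, uu w 0 B⁆ =
      uu 1 ((f ∘ₗ (↑B : M →ₗ[ℂ] M) ∘ₗ (↑A⁻¹ : M →ₗ[ℂ] M)
          - (w : ℂ) • (f ∘ₗ (↑A⁻¹ : M →ₗ[ℂ] M))) ∘ₗ (↑B⁻¹ : M →ₗ[ℂ] M)) ⁅A, B⁆ := by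
  rw [commutatorElement_def, commutatorElement_def, uu_inv, uu_inv, uu_mul, uu_mul, uu_mul]
  apply Units.ext
  apply LinearMap.ext; rintro ⟨t, x⟩
  simp [Module.End.mul_apply, Units.val_mul]
  ring

/-- homomorphism `GL(M) → GL(ℂ × M)`, `A ↦ [[1,0],[0,A]]`. -/
noncomputable def j₀ : (M →ₗ[ℂ] M)ˣ →* ((ℂ × M) →ₗ[ℂ] (ℂ × M))ˣ :=
  MonoidHom.mk' (fun A => uu 1 0 A) (by
    intro a b
    rw [uu_mul]
    simp)

lemma prod_ofFn_split {H : Type*} [Monoid H] {n : ℕ} (v : Fin (n + 2) → H) :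
    (List.ofFn v).prod = v 0 * (v 1 * (List.ofFn fun j : Fin n => v j.succ.succ).prod) := by
  rw [List.ofFn_succ, List.prod_cons, List.ofFn_succ, List.prod_cons, Fin.succ_zero_eq_one]

/-! ### Surface group generalities -/

def sgRels (g : ℕ) : Set (FreeGroup (Fin g × Bool)) :=
  {(List.ofFn fun i : Fin g =>
      ⁅FreeGroup.of ((i : Fin g), false), FreeGroup.of ((i : Fin g), true)⁆).prod}

def sgOf {g : ℕ} (s : Fin g × Bool) : SurfaceGroup g :=
  PresentedGroup.of (rels := sgRels g) s

/-- Extend a map on generators killing the surface relation to a homomorphism. -/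
def sgLift {g : ℕ} {H : Type*} [Group H] (d : Fin g × Bool → H)
    (h : (List.ofFn fun i : Fin g => ⁅d (i, false), d (i, true)⁆).prod = 1) :
    SurfaceGroup g →* H :=
  PresentedGroup.toGroup (rels := sgRels g) (f := d) (by
    rintro r hr
    rw [sgRels, Set.mem_singleton_iff] at hr
    subst hr
    rw [map_list_prod, List.map_ofFn]
    have : (FreeGroup.lift d) ∘ (fun i : Fin g =>
        ⁅FreeGroup.of ((i : Fin g), false), FreeGroup.of ((i : Fin g), true)⁆)
        = fun i : Fin g => ⁅d (i, false), d (i, true)⁆ := by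
      funext i
      simp [map_commutatorElement]
    rw [this, h])

@[simp] lemma sgLift_of {g : ℕ} {H : Type*} [Group H] (d : Fin g × Bool → H)
    (h : (List.ofFn fun i : Fin g => ⁅d (i, false), d (i, true)⁆).prod = 1)
    (s : Fin g × Bool) : sgLift d h (sgOf s) = d s :=
  PresentedGroup.toGroup.of _

lemma sg_relator_prod {g : ℕ} :
    (List.ofFn fun i : Fin g =>
      ⁅(sgOf (i, false) : SurfaceGroup g), sgOf (i, true)⁆).prod = 1 := by
  have key : (List.ofFn fun i : Fin g =>
      (⁅(PresentedGroup.of ((i : Fin g), false) : PresentedGroup (sgRels g)),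
        (PresentedGroup.of ((i : Fin g), true) : PresentedGroup (sgRels g))⁆)).prod = 1 := by
    have h1 : (List.ofFn fun i : Fin g =>
        (⁅(PresentedGroup.of ((i : Fin g), false) : PresentedGroup (sgRels g)),
          (PresentedGroup.of ((i : Fin g), true) : PresentedGroup (sgRels g))⁆))
        = (List.ofFn fun i : Fin g =>
            ⁅FreeGroup.of ((i : Fin g), false), FreeGroup.of ((i : Fin g), true)⁆).map
          (PresentedGroup.mk (sgRels g)) := by
      rw [List.map_ofFn]
      refine congrArg List.ofFn (funext fun i => ?_)
      simp only [Function.comp_apply, map_commutatorElement]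
      rfl
    rw [h1, ← map_list_prod]
    refine (QuotientGroup.eq_one_iff _).mpr ?_
    exact Subgroup.subset_normalClosure rfl
  exact key

lemma sg_induction {g : ℕ} {C : SurfaceGroup g → Prop} (h1 : C 1)
    (hof : ∀ s, C (sgOf s)) (hinv : ∀ s, C (sgOf s) → C (sgOf s)⁻¹)
    (hmul : ∀ a b, C a → C b → C (a * b)) : ∀ x, C x := by
  intro x
  refine PresentedGroup.induction_on (rels := sgRels g) x ?_
  intro z
  induction z using FreeGroup.induction_on with
  | C1 => exact h1
  | of s => exact hof s
  | inv_of s ih => exact hinv s ih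
  | mul a b iha ihb => exact hmul _ _ iha ihb

end SGAux

open SGAux in
/-- Let `Γ_g` be a surface group of genus `g ≥ 2`, `E` a
finite-dimensional complex representation of `Γ_g`, and `e ∈ H⁰(Γ_g, E) = E^{Γ_g}` a
nonzero invariant vector.  Then there exists a finite-dimensional representation `E'` and a
`Γ_g`-equivariant surjection `q : E' → E` such that `e` is not in the image of
`H⁰(Γ_g, E') → H⁰(Γ_g, E)`. -/
theorem surface_group_invariant_vector_not_liftable
    (g : ℕ) (hg : 2 ≤ g)
    (E : Rep.{0} ℂ (SurfaceGroup g)) (hE : FiniteDimensional ℂ E)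
    (e : E) (he : e ∈ E.ρ.invariants) (hne : e ≠ 0) :
    ∃ (E' : Rep.{0} ℂ (SurfaceGroup g)) (_ : FiniteDimensional ℂ E') (q : E' ⟶ E),
      Function.Surjective q.hom ∧
        e ∉ q.hom '' (E'.ρ.invariants : Set E') := by
  obtain ⟨n, rfl⟩ : ∃ n, g = n + 2 := ⟨g - 2, by omega⟩
  clear hg
  haveI := hE
  -- a functional with `f e = 1`
  obtain ⟨φ0, hφ0⟩ : ∃ φ : Module.Dual ℂ E, φ e ≠ 0 := by
    by_contra hcon
    push_neg at hcon
    exact hne ((Module.forall_dual_apply_eq_zero_iff ℂ e).mp hcon)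
  set f : (E : Type) →ₗ[ℂ] ℂ := (φ0 e)⁻¹ • φ0 with hfdef
  have hf : f e = 1 := by
    rw [hfdef]
    simp [inv_mul_cancel₀ hφ0]
  -- the units-valued representation
  set ρU : SurfaceGroup (n + 2) →* ((E : Type) →ₗ[ℂ] (E : Type))ˣ :=
    MonoidHom.toHomUnits
      (E.ρ : SurfaceGroup (n + 2) →* ((E : Type) →ₗ[ℂ] (E : Type))) with hρU
  have hρUcoe : ∀ γ, ((ρU γ : ((E : Type) →ₗ[ℂ] (E : Type))ˣ) : (E : Type) →ₗ[ℂ] (E : Type))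
      = E.ρ γ := fun γ => rfl
  -- choice of z
  set B0 : Module.End ℂ (E : Type) := E.ρ (sgOf ((0 : Fin (n + 2)), true)) with hB0
  obtain ⟨z, hz⟩ :=
    (((Module.End.finite_hasEigenvalue B0).union (Set.finite_singleton 0)).infinite_compl).nonempty
  simp only [Set.mem_compl_iff, Set.mem_union, Set.mem_singleton_iff, not_or] at hz
  obtain ⟨hzeig, hz0⟩ := hz
  have hker : LinearMap.ker (B0 - z • (1 : Module.End ℂ (E : Type))) = ⊥ := by
    rw [← Module.End.eigenspace_def]
    exact not_ne_iff.mp hzeig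
  have hinj := LinearMap.ker_eq_bot.mp hker
  set W := LinearEquiv.ofInjectiveEndo _ hinj with hWdef
  have hW : ∀ x : (E : Type), W.symm ((B0 - z • (1 : Module.End ℂ (E : Type))) x) = x := by
    intro x
    have h := W.symm_apply_apply x
    rwa [show W x = (B0 - z • (1 : Module.End ℂ (E : Type))) x from rfl] at h
  set zu : ℂˣ := Units.mk0 z hz0 with hzu
  -- names for the four relevant generator images
  set A0u := ρU (sgOf ((0 : Fin (n + 2)), false)) with hA0u
  set B0u := ρU (sgOf ((0 : Fin (n + 2)), true)) with hB0u
  set A1u := ρU (sgOf ((1 : Fin (n + 2)), false)) with hA1u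
  set B1u := ρU (sgOf ((1 : Fin (n + 2)), true)) with hB1u
  set Q1u : ((E : Type) →ₗ[ℂ] (E : Type))ˣ := ⁅A1u, B1u⁆ with hQ1u
  set φ₁ : (E : Type) →ₗ[ℂ] ℂ :=
    (f ∘ₗ (↑B1u : (E : Type) →ₗ[ℂ] (E : Type)) ∘ₗ (↑A1u⁻¹ : (E : Type) →ₗ[ℂ] (E : Type))
      - f ∘ₗ (↑A1u⁻¹ : (E : Type) →ₗ[ℂ] (E : Type)))
      ∘ₗ (↑B1u⁻¹ : (E : Type) →ₗ[ℂ] (E : Type)) with hφ₁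
  set k : (E : Type) →ₗ[ℂ] ℂ :=
    -(φ₁ ∘ₗ (↑Q1u⁻¹ : (E : Type) →ₗ[ℂ] (E : Type))
      ∘ₗ (↑B0u : (E : Type) →ₗ[ℂ] (E : Type))
      ∘ₗ (↑A0u : (E : Type) →ₗ[ℂ] (E : Type))
      ∘ₗ (W.symm : (E : Type) →ₗ[ℂ] (E : Type))) with hk
  -- generator data
  set χ₀ : Fin (n + 2) × Bool → ℂˣ :=
    fun s => if s = ((0 : Fin (n + 2)), true) then zu else 1 with hχ₀
  set c : Fin (n + 2) × Bool → ((E : Type) →ₗ[ℂ] ℂ) :=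
    fun s => if s = ((0 : Fin (n + 2)), false) then k
      else if s = ((1 : Fin (n + 2)), false) then f else 0 with hc
  set d : Fin (n + 2) × Bool → (((ℂ × (E : Type)) →ₗ[ℂ] (ℂ × (E : Type)))ˣ) :=
    fun s => uu (χ₀ s) (c s) (ρU (sgOf s)) with hd
  have hone0 : (1 : Fin (n + 2)) ≠ 0 := by simp [Fin.ext_iff]
  have hχa : ∀ i : Fin (n + 2), χ₀ (i, false) = 1 := by
    intro i; rw [hχ₀]; simp
  have hχ1t : χ₀ ((1 : Fin (n + 2)), true) = 1 := by
    rw [hχ₀]; simp [hone0]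
  have hχ0t : χ₀ ((0 : Fin (n + 2)), true) = zu := by rw [hχ₀]; simp
  have hcb : ∀ i : Fin (n + 2), c (i, true) = 0 := by
    intro i; rw [hc]; simp
  have hc00 : c ((0 : Fin (n + 2)), false) = k := by rw [hc]; simp
  have hc10 : c ((1 : Fin (n + 2)), false) = f := by rw [hc]; simp [hone0]
  -- the per-index commutator images
  set Q : Fin (n + 2) → ((E : Type) →ₗ[ℂ] (E : Type))ˣ :=
    fun i => ⁅ρU (sgOf (i, false)), ρU (sgOf (i, true))⁆ with hQdef
  set ψ : Fin (n + 2) → ((E : Type) →ₗ[ℂ] ℂ) :=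
    fun i => (c (i, false) ∘ₗ (↑(ρU (sgOf (i, true))) : (E : Type) →ₗ[ℂ] (E : Type))
        ∘ₗ (↑(ρU (sgOf (i, false)))⁻¹ : (E : Type) →ₗ[ℂ] (E : Type))
      - ((χ₀ (i, true) : ℂˣ) : ℂ) •
        (c (i, false) ∘ₗ (↑(ρU (sgOf (i, false)))⁻¹ : (E : Type) →ₗ[ℂ] (E : Type))))
      ∘ₗ (↑(ρU (sgOf (i, true)))⁻¹ : (E : Type) →ₗ[ℂ] (E : Type)) with hψdef
  have hent : ∀ i : Fin (n + 2), ⁅d (i, false), d (i, true)⁆ = uu 1 (ψ i) (Q i) := by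
    intro i
    rw [hd]
    simp only []
    rw [hχa i, hcb i, hψdef, hQdef]
    exact uu_comm (c (i, false)) (χ₀ (i, true)) _ _
  -- tail entries vanish
  have hsucc_ne_zero : ∀ j : Fin n, ((j.succ.succ : Fin (n + 2))) ≠ 0 :=
    fun j => Fin.succ_ne_zero j.succ
  have hsucc_ne_one : ∀ j : Fin n, ((j.succ.succ : Fin (n + 2))) ≠ 1 := by
    intro j h
    rw [← Fin.succ_zero_eq_one] at h
    exact Fin.succ_ne_zero j (Fin.succ_injective _ h)
  have hψtail : ∀ j : Fin n, ψ j.succ.succ = 0 := by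
    intro j
    have h0 : c (j.succ.succ, false) = 0 := by
      rw [hc]; simp [hsucc_ne_zero j, hsucc_ne_one j]
    rw [hψdef]
    simp only [h0]
    simp
  -- the product of all Q's is 1
  have hQprod : (List.ofFn Q).prod = 1 := by
    have h1 : List.ofFn Q
        = (List.ofFn fun i : Fin (n + 2) =>
            ⁅(sgOf (i, false) : SurfaceGroup (n + 2)), sgOf (i, true)⁆).map ρU := by
      rw [List.map_ofFn]
      refine congrArg List.ofFn (funext fun i => ?_)
      rw [hQdef]
      simp [map_commutatorElement]
    rw [h1, ← map_list_prod, sg_relator_prod, map_one]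
  set T := (List.ofFn fun j : Fin n => Q j.succ.succ).prod with hT
  have hQ1T : Q 0 * (Q 1 * T) = 1 := by
    rw [hT, ← prod_ofFn_split Q]
    exact hQprod
  -- the key linear identity
  have hkey : ∀ y : (E : Type), ψ 1 y + ψ 0 ((↑(Q 1) : (E : Type) →ₗ[ℂ] (E : Type)) y) = 0 := by
    intro y
    have hψ1 : ψ 1 = φ₁ := by
      rw [hψdef, hφ₁]
      simp only [hc10, hχ1t, Units.val_one, one_smul]
      rfl
    have hψ0 : ψ 0 = (k ∘ₗ (↑B0u : (E : Type) →ₗ[ℂ] (E : Type))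
          ∘ₗ (↑A0u⁻¹ : (E : Type) →ₗ[ℂ] (E : Type))
        - z • (k ∘ₗ (↑A0u⁻¹ : (E : Type) →ₗ[ℂ] (E : Type))))
        ∘ₗ (↑B0u⁻¹ : (E : Type) →ₗ[ℂ] (E : Type)) := by
      rw [hψdef]
      simp only [hc00, hχ0t, hzu, Units.val_mk0]
      rfl
    have hQ1Q1u : Q 1 = Q1u := by rw [hQdef, hQ1u, hA1u, hB1u]
    rw [hψ1, hψ0, hQ1Q1u]
    set v : (E : Type) := (↑A0u⁻¹ : (E : Type) →ₗ[ℂ] (E : Type))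
      ((↑B0u⁻¹ : (E : Type) →ₗ[ℂ] (E : Type))
        ((↑Q1u : (E : Type) →ₗ[ℂ] (E : Type)) y)) with hv
    have hBv : (B0 - z • (1 : Module.End ℂ (E : Type))) v
        = (↑B0u : (E : Type) →ₗ[ℂ] (E : Type)) v - z • v := by
      simp [LinearMap.sub_apply, LinearMap.smul_apply, hB0u, hρUcoe, hB0]
    have hkv : k ((↑B0u : (E : Type) →ₗ[ℂ] (E : Type)) v) - z • k v
        = -(φ₁ ((↑Q1u⁻¹ : (E : Type) →ₗ[ℂ] (E : Type))
            ((↑B0u : (E : Type) →ₗ[ℂ] (E : Type))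
              ((↑A0u : (E : Type) →ₗ[ℂ] (E : Type)) v)))) := by
      have h1 : k ((B0 - z • (1 : Module.End ℂ (E : Type))) v)
          = k ((↑B0u : (E : Type) →ₗ[ℂ] (E : Type)) v) - z • k v := by
        rw [hBv, map_sub, map_smul]
      rw [← h1, hk]
      simp only [LinearMap.neg_apply, LinearMap.comp_apply, LinearEquiv.coe_coe]
      rw [hW]
    -- now compute
    simp only [LinearMap.comp_apply, LinearMap.sub_apply, LinearMap.smul_apply]
    rw [← hv]
    rw [hkv]
    have hcancel : (↑B0u : (E : Type) →ₗ[ℂ] (E : Type))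
        ((↑A0u : (E : Type) →ₗ[ℂ] (E : Type)) v)
        = (↑Q1u : (E : Type) →ₗ[ℂ] (E : Type)) y := by
      rw [hv]
      simp
    rw [hcancel]
    simp
  -- the relator is killed
  have hrel : (List.ofFn fun i : Fin (n + 2) => ⁅d (i, false), d (i, true)⁆).prod = 1 := by
    have hl : (List.ofFn fun i : Fin (n + 2) => ⁅d (i, false), d (i, true)⁆)
        = List.ofFn fun i : Fin (n + 2) => uu 1 (ψ i) (Q i) :=
      congrArg List.ofFn (funext hent)
    rw [hl, prod_ofFn_split]
    have htail : (List.ofFn fun j : Fin n => uu 1 (ψ j.succ.succ) (Q j.succ.succ)).prod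
        = uu 1 0 T := by
      have h2 : (List.ofFn fun j : Fin n => uu 1 (ψ j.succ.succ) (Q j.succ.succ))
          = (List.ofFn fun j : Fin n => Q j.succ.succ).map (j₀ (M := (E : Type))) := by
        rw [List.map_ofFn]
        refine congrArg List.ofFn (funext fun j => ?_)
        rw [hψtail j]
        rfl
      rw [h2, ← map_list_prod, hT]
      rfl
    rw [htail, uu_mul, uu_mul, hQ1T]
    rw [show ((1 : ℂˣ) * (1 * 1) : ℂˣ) = 1 by simp]
    rw [← uu_one]
    congr 1
    apply LinearMap.ext
    intro x
    simp only [LinearMap.add_apply, LinearMap.smul_apply, LinearMap.comp_apply,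
      LinearMap.zero_apply, Units.val_mul, Module.End.mul_apply, smul_zero, zero_add, one_smul,
      smul_eq_mul, one_mul, mul_one, LinearMap.zero_comp, LinearMap.comp_zero]
    have hk2 := hkey ((↑T : (E : Type) →ₗ[ℂ] (E : Type)) x)
    simpa using hk2
  -- the new representation
  set Ψ : SurfaceGroup (n + 2) →* (((ℂ × (E : Type)) →ₗ[ℂ] (ℂ × (E : Type)))ˣ) :=
    sgLift d hrel with hΨ
  set ρ' : Representation ℂ (SurfaceGroup (n + 2)) (ℂ × (E : Type)) :=
    (Units.coeHom _).comp Ψ with hρ'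
  have hρ'of : ∀ s, ρ' (sgOf s) = uval ((χ₀ s : ℂˣ) : ℂ) (c s) (E.ρ (sgOf s)) := by
    intro s
    rw [hρ']
    simp only [MonoidHom.comp_apply, Units.coeHom_apply, hΨ, sgLift_of, hd]
    rfl
  have hsnd : ∀ γ : SurfaceGroup (n + 2),
      (LinearMap.snd ℂ ℂ (E : Type)) ∘ₗ ρ' γ = E.ρ γ ∘ₗ (LinearMap.snd ℂ ℂ (E : Type)) := by
    refine sg_induction ?_ ?_ ?_ ?_
    · simp only [map_one]
      apply LinearMap.ext; intro v
      rfl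
    · intro s
      apply LinearMap.ext; rintro ⟨t, x⟩
      rw [hρ'of s]
      simp
    · intro s ih
      apply LinearMap.ext; rintro v
      have h1 : ρ' (sgOf s) (ρ' (sgOf s)⁻¹ v) = v := by
        rw [← Module.End.mul_apply, ← map_mul, mul_inv_cancel, map_one, Module.End.one_apply]
      have h2 := LinearMap.congr_fun ih (ρ' (sgOf s)⁻¹ v)
      simp only [LinearMap.comp_apply] at h2 ⊢
      rw [h1] at h2
      rw [h2, Representation.inv_self_apply]
    · intro a b iha ihb
      apply LinearMap.ext; rintro v
      have ha := LinearMap.congr_fun iha (ρ' b v)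
      have hb := LinearMap.congr_fun ihb v
      simp only [LinearMap.comp_apply] at ha hb ⊢
      rw [map_mul, map_mul, Module.End.mul_apply, Module.End.mul_apply, ha, hb]
  -- assemble
  refine ⟨Rep.of ρ', inferInstanceAs (FiniteDimensional ℂ (ℂ × (E : Type))),
    CategoryTheory.ConcreteCategory.ofHom (C := Rep ℂ (SurfaceGroup (n + 2)))
      ⟨(LinearMap.snd ℂ ℂ (E : Type) : (ℂ × (E : Type)) →ₗ[ℂ] (E : Type)), fun γ => hsnd γ⟩,
    ?_, ?_⟩
  · intro x
    exact ⟨(0, x), rfl⟩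
  · rintro ⟨⟨t, x⟩, hwmem, hwq⟩
    have hx : x = e := hwq
    have h2 : ρ' (sgOf ((1 : Fin (n + 2)), false)) (t, x) = (t, x) :=
      hwmem (sgOf ((1 : Fin (n + 2)), false))
    rw [hρ'of, uval_apply, hχa, hc10, hx, hf] at h2
    have h3 := congrArg Prod.fst h2
    simp only [Units.val_one, one_mul] at h3
    have h4 : (1 : ℂ) = 0 := by
      have h5 : t + 1 = t := h3
      linear_combination h5 - h3 + h3
    exact one_ne_zero h4
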